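/- For every n ≥ 2, the product Mₙ¹ × ⋯ × Mₙⁿ of the component machines of the n-bit register machine is not minimal: it has a state that is not reachable from its initial state. -/

import Mathlib

/-- A Moore machine with input alphabet `I` and output alphabet `O`:
a finite set of states `Q`, a transition function `δ`, an output
function `o` and an initial state `q₀`. -/
structure Moore (I O : Type) where
  Q : Type
  [fin : Fintype Q]
  δ : Q → I → Q
  o : Q → O
  q₀ : Q

attribute [instance] Moore.fin

namespace Moore

variable {I O O₁ O₂ : Type}

/-- The transition function extended to words: `δ(q, ε) = q`, `δ(q, aw) = δ(δ(q,a), w)`. -/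
def run (M : Moore I O) (q : M.Q) : List I → M.Q
  | [] => q
  | a :: w => M.run (M.δ q a) w

/-- The behaviour of a state: `⟦q⟧(w) = o(δ(q, w))`. -/
def stateBeh (M : Moore I O) (q : M.Q) (w : List I) : O := M.o (M.run q w)

/-- The behaviour of a machine: `⟦M⟧ = ⟦q₀⟧`. -/
def beh (M : Moore I O) (w : List I) : O := M.stateBeh M.q₀ w

/-- The size of a machine: the number of its states. -/
def size (M : Moore I O) : ℕ := Fintype.card M.Q

/-- A state is reachable if it is `δ(q₀, w)` for some word `w`. -/
def Reachable (M : Moore I O) (q : M.Q) : Prop := ∃ w : List I, M.run M.q₀ w = q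

/-- A machine is minimal if all states are reachable and distinct states
have different behaviour. -/
def Minimal (M : Moore I O) : Prop :=
  (∀ q, M.Reachable q) ∧ ∀ q q' : M.Q, M.stateBeh q = M.stateBeh q' → q = q'

/-- The product of two Moore machines over the same input alphabet. -/
def prod (M₁ : Moore I O₁) (M₂ : Moore I O₂) : Moore I (O₁ × O₂) where
  Q := M₁.Q × M₂.Q
  δ := fun q a => (M₁.δ q.1 a, M₂.δ q.2 a)
  o := fun q => (M₁.o q.1, M₂.o q.2)
  q₀ := (M₁.q₀, M₂.q₀)

/-- The first component of a machine with product outputs. -/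
def comp₁ (M : Moore I (O₁ × O₂)) : Moore I O₁ :=
  { Q := M.Q, δ := M.δ, o := fun q => (M.o q).1, q₀ := M.q₀ }

/-- The second component of a machine with product outputs. -/
def comp₂ (M : Moore I (O₁ × O₂)) : Moore I O₂ :=
  { Q := M.Q, δ := M.δ, o := fun q => (M.o q).2, q₀ := M.q₀ }

end Moore

/-- The input alphabet of the `n`-bit register machine: move left, move right, flip. -/
inductive RegInput : Type
  | L : RegInput
  | R : RegInput
  | F : RegInput

/-- The `n`-bit register machine `Mₙ`: states are a bit vector together with a head
position; `L`/`R` move the head (wrapping around), `F` flips the bit under the head;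
the output is the bit vector. -/
def regMachine (n : ℕ) (hn : 0 < n) : Moore RegInput (Fin n → Bool) :=
  letI : NeZero n := ⟨hn.ne'⟩
  { Q := (Fin n → Bool) × Fin n
    δ := fun q i =>
      match i with
      | .L => (q.1, q.2 - 1)
      | .R => (q.1, q.2 + 1)
      | .F => (Function.update q.1 q.2 (!(q.1 q.2)), q.2)
    o := fun q => q.1
    q₀ := (fun _ => false, ⟨0, hn⟩) }

/-- The `l`-th component machine `Mₙˡ` of the `n`-bit register machine: states are a
single bit together with a head position; `L`/`R` move the head (wrapping around),
`F` flips the bit only when the head is at position `l`; the output is the bit. -/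
def regComponent (n : ℕ) (hn : 0 < n) (l : Fin n) : Moore RegInput Bool :=
  letI : NeZero n := ⟨hn.ne'⟩
  { Q := Bool × Fin n
    δ := fun q i =>
      match i with
      | .L => (q.1, q.2 - 1)
      | .R => (q.1, q.2 + 1)
      | .F => (if q.2 = l then !q.1 else q.1, q.2)
    o := fun q => q.1
    q₀ := (false, ⟨0, hn⟩) }

/-- The product `Mₙ¹ × ⋯ × Mₙⁿ` of the component machines of the `n`-bit register
machine: states are tuples of component states, with componentwise transitions and
outputs. -/
def regProduct (n : ℕ) (hn : 0 < n) : Moore RegInput (Fin n → Bool) where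
  Q := Fin n → (regComponent n hn ⟨0, hn⟩).Q
  δ := fun q i => fun l => (regComponent n hn l).δ (q l) i
  o := fun q => fun l => (regComponent n hn l).o (q l)
  q₀ := fun l => (regComponent n hn l).q₀

/-- For `n ≥ 2`, the product of the component machines of the `n`-bit register
machine is not minimal: it has an unreachable state. -/
theorem regProduct_not_minimal (n : ℕ) (hn : 2 ≤ n) :
    ¬ (regProduct n (by omega)).Minimal ∧
      ∃ q : (regProduct n (by omega)).Q, ¬ (regProduct n (by omega)).Reachable q := by
  have hn0 : 0 < n := by omega
  have key : ∀ (w : List RegInput) (q : (regProduct n hn0).Q),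
      (∀ l l', (q l).2 = (q l').2) →
      ∀ l l', (((regProduct n hn0).run q w) l).2 = (((regProduct n hn0).run q w) l').2 := by
    intro w
    induction w with
    | nil => intro q h l l'; exact h l l'
    | cons a w ih =>
      intro q h l l'
      refine ih _ ?_ l l'
      intro l l'
      cases a <;> simp [regProduct, regComponent, h l l']
  have hunreach : ¬ (regProduct n hn0).Reachable (fun l => (false, l)) := by
    rintro ⟨w, hw⟩
    have h01 := key w (regProduct n hn0).q₀ (fun l l' => rfl) ⟨0, hn0⟩ ⟨1, by omega⟩
    rw [hw] at h01
    simp at h01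
  exact ⟨fun hm => hunreach (hm.1 _), _, hunreach⟩
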